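/- System (II) of the alternative (existence of d with A^{I_D}d = −sign(ŷ_{I_D}), sign(A^{I_P∖I_D}x̂ − b_{I_P∖I_D}) ⊙ A^{I_P∖I_D}d ≤ −𝟙, (A_{J_D∖J_P}ᵀŷ) ⊙ d_{J_D∖J_P} ≤ 0, d_{J_D^c} = 0) is feasible if and only if the primal update LP — maximize t over (x,t) with A^{I_D}x − b_{I_D} = (δ̂ − t)·sign(ŷ_{I_D}), (t − δ̂)𝟙 ≤ A^{I_D^c}x − b_{I_D^c} ≤ (δ̂ − t)𝟙, (Aᵀŷ) ⊙ x ≤ 0, x_{J_D^c} = 0, t ≤ δ̂ − δ — admits a feasible point with t > 0. -/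

import Mathlib

open Finset Pointwise

noncomputable def l1 {n : ℕ} (x : Fin n → ℝ) : ℝ := ∑ j, |x j|

noncomputable def linf {m : ℕ} (x : Fin m → ℝ) : ℝ := ⨆ i, |x i|

def SignSet {n : ℕ} (x : Fin n → ℝ) : Set (Fin n → ℝ) :=
  {ξ | (∀ j, |ξ j| ≤ 1) ∧ ∀ j, x j ≠ 0 → ξ j = Real.sign (x j)}

def Feas {m n : ℕ} (A : Matrix (Fin m) (Fin n) ℝ) (b : Fin m → ℝ) (δ : ℝ)
    (x : Fin n → ℝ) : Prop := linf (A.mulVec x - b) ≤ δ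

def IsOpt {m n : ℕ} (A : Matrix (Fin m) (Fin n) ℝ) (b : Fin m → ℝ) (δ : ℝ)
    (x : Fin n → ℝ) : Prop := Feas A b δ x ∧ ∀ z, Feas A b δ z → l1 x ≤ l1 z

def DualCert {m n : ℕ} (A : Matrix (Fin m) (Fin n) ℝ) (b : Fin m → ℝ) (δ : ℝ)
    (x : Fin n → ℝ) (y : Fin m → ℝ) : Prop :=
  (-(A.transpose.mulVec y) ∈ SignSet x) ∧ (A.mulVec x - b ∈ δ • SignSet y)

lemma sign_mul_self_eq_abs {x : ℝ} (hx : x ≠ 0) : Real.sign x * x = |x| := by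
  rcases hx.lt_or_gt with h | h
  · rw [Real.sign_of_neg h, abs_of_neg h]; ring
  · rw [Real.sign_of_pos h, abs_of_pos h]; ring

lemma abs_sign_eq_one {x : ℝ} (hx : x ≠ 0) : |Real.sign x| = 1 := by
  rcases hx.lt_or_gt with h | h
  · rw [Real.sign_of_neg h]; norm_num
  · rw [Real.sign_of_pos h]; norm_num

lemma exists_pos_le_forall {α : Type*} [Fintype α] (f : α → ℝ) (hf : ∀ i, 0 < f i)
    (c : ℝ) (hc : 0 < c) : ∃ ε : ℝ, 0 < ε ∧ ε ≤ c ∧ ∀ i, ε ≤ f i := by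
  classical
  set S := insert c (Finset.univ.image f) with hS'
  have hS : S.Nonempty := ⟨c, Finset.mem_insert_self _ _⟩
  refine ⟨S.min' hS, ?_, ?_, ?_⟩
  · apply (Finset.lt_min'_iff S hS).2
    intro y hy
    rcases Finset.mem_insert.1 hy with rfl | hy
    · exact hc
    · obtain ⟨i, _, rfl⟩ := Finset.mem_image.1 hy; exact hf i
  · exact S.min'_le c (Finset.mem_insert_self _ _)
  · intro i
    exact S.min'_le _ (Finset.mem_insert.2 (Or.inr
      (Finset.mem_image_of_mem f (Finset.mem_univ i))))

theorem systemII_iff_primal_update_progress {m n : ℕ} (A : Matrix (Fin m) (Fin n) ℝ)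
    (b : Fin m → ℝ) (δ δhat : ℝ) (hδ0 : 0 ≤ δ) (hδ : δ < δhat) (hδb : δhat < linf b)
    (xhat : Fin n → ℝ) (yhat : Fin m → ℝ) (hopt : DualCert A b δhat xhat yhat) :
    (∃ d : Fin n → ℝ,
        (∀ i, yhat i ≠ 0 → A.mulVec d i = -Real.sign (yhat i)) ∧
        (∀ i, |A.mulVec xhat i - b i| = δhat → yhat i = 0 →
          Real.sign (A.mulVec xhat i - b i) * A.mulVec d i ≤ -1) ∧
        (∀ j, |∑ i, A i j * yhat i| = 1 → xhat j = 0 →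
          (∑ i, A i j * yhat i) * d j ≤ 0) ∧
        (∀ j, |∑ i, A i j * yhat i| ≠ 1 → d j = 0)) ↔
    (∃ (x : Fin n → ℝ) (t : ℝ), 0 < t ∧
        (∀ i, yhat i ≠ 0 → A.mulVec x i - b i = (δhat - t) * Real.sign (yhat i)) ∧
        (∀ i, yhat i = 0 →
          t - δhat ≤ A.mulVec x i - b i ∧ A.mulVec x i - b i ≤ δhat - t) ∧
        (∀ j, (∑ i, A i j * yhat i) * x j ≤ 0) ∧
        (∀ j, |∑ i, A i j * yhat i| ≠ 1 → x j = 0) ∧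
        t ≤ δhat - δ) := by
  classical
  have hδhat : 0 < δhat := lt_of_le_of_lt hδ0 hδ
  obtain ⟨h1, h2⟩ := hopt
  simp only [SignSet, Set.mem_setOf_eq] at h1
  obtain ⟨hA1, hA2⟩ := h1
  -- facts about c j := ∑ i, A i j * yhat i
  have hct : ∀ j, A.transpose.mulVec yhat j = ∑ i, A i j * yhat i := by
    intro j; simp [Matrix.mulVec, dotProduct, Matrix.transpose_apply]
  have hc2 : ∀ j, xhat j ≠ 0 → (∑ i, A i j * yhat i) = -Real.sign (xhat j) := by
    intro j hj
    have := hA2 j hj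
    simp only [Pi.neg_apply] at this
    rw [← hct j]; linarith
  have hJ : ∀ j, |∑ i, A i j * yhat i| ≠ 1 → xhat j = 0 := by
    intro j hj
    by_contra hx
    exact hj (by rw [hc2 j hx, abs_neg, abs_sign_eq_one hx])
  -- facts about v i := A.mulVec xhat i - b i
  rw [Set.mem_smul_set] at h2
  obtain ⟨ξ, ⟨hξ1, hξ2⟩, hξ⟩ := h2
  have hξ' : ∀ i, A.mulVec xhat i - b i = δhat * ξ i := by
    intro i
    have := congrFun hξ i
    simp only [Pi.smul_apply, smul_eq_mul, Pi.sub_apply] at this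
    linarith
  have hv1 : ∀ i, |A.mulVec xhat i - b i| ≤ δhat := by
    intro i
    rw [hξ' i, abs_mul, abs_of_pos hδhat]
    calc δhat * |ξ i| ≤ δhat * 1 := by
          exact mul_le_mul_of_nonneg_left (hξ1 i) hδhat.le
      _ = δhat := mul_one _
  have hv2 : ∀ i, yhat i ≠ 0 → A.mulVec xhat i - b i = δhat * Real.sign (yhat i) := by
    intro i hi; rw [hξ' i, hξ2 i hi]
  constructor
  · rintro ⟨d, hd1, hd2, hd3, hd4⟩
    obtain ⟨ε1, hε1pos, hε1c, hε1⟩ := exists_pos_le_forall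
      (fun i : Fin m => if |A.mulVec xhat i - b i| < δhat then
        (δhat - |A.mulVec xhat i - b i|) / (1 + |A.mulVec d i|) else 1)
      (by
        intro i; split_ifs with h
        · exact div_pos (by linarith) (by positivity)
        · exact one_pos)
      (δhat - δ) (by linarith)
    obtain ⟨ε2, hε2pos, _, hε2⟩ := exists_pos_le_forall
      (fun i : Fin m => 2 * δhat / (1 + |A.mulVec d i|))
      (by intro i; exact div_pos (by linarith) (by positivity)) 1 one_pos
    obtain ⟨ε3, hε3pos, _, hε3⟩ := exists_pos_le_forall
      (fun j : Fin n => if xhat j = 0 then 1 else |xhat j| / (1 + |d j|))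
      (by
        intro j; split_ifs with h
        · exact one_pos
        · exact div_pos (abs_pos.2 h) (by positivity)) 1 one_pos
    set ε := min ε1 (min ε2 ε3) with hεdef
    have hεpos : 0 < ε := lt_min hε1pos (lt_min hε2pos hε3pos)
    have hεle1 : ∀ i, ε ≤ if |A.mulVec xhat i - b i| < δhat then
        (δhat - |A.mulVec xhat i - b i|) / (1 + |A.mulVec d i|) else 1 :=
      fun i => le_trans (min_le_left _ _) (hε1 i)
    have hεle2 : ∀ i, ε ≤ 2 * δhat / (1 + |A.mulVec d i|) :=
      fun i => le_trans (le_trans (min_le_right _ _) (min_le_left _ _)) (hε2 i)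
    have hεle3 : ∀ j, ε ≤ if xhat j = 0 then 1 else |xhat j| / (1 + |d j|) :=
      fun j => le_trans (le_trans (min_le_right _ _) (min_le_right _ _)) (hε3 j)
    have hmv : ∀ i, A.mulVec (xhat + ε • d) i = A.mulVec xhat i + ε * A.mulVec d i := by
      intro i
      rw [Matrix.mulVec_add, Matrix.mulVec_smul]
      simp
    refine ⟨xhat + ε • d, ε, hεpos, ?_, ?_, ?_, ?_, ?_⟩
    · intro i hi
      rw [hmv i]
      linear_combination (hv2 i hi) + ε * (hd1 i hi)
    · intro i hi
      rw [hmv i]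
      have hw1 : (0:ℝ) < 1 + |A.mulVec d i| := by positivity
      rcases eq_or_lt_of_le (hv1 i) with heq | hlt
      · have hvne : A.mulVec xhat i - b i ≠ 0 := by
          intro h; rw [h] at heq; simp at heq; linarith
        have hs := hd2 i heq hi
        have hεw : ε * (1 + |A.mulVec d i|) ≤ 2 * δhat :=
          (le_div_iff₀ hw1).mp (hεle2 i)
        rcases hvne.lt_or_gt with hneg | hpos
        · have hsv : Real.sign (A.mulVec xhat i - b i) = -1 := Real.sign_of_neg hneg
          rw [hsv] at hs
          have hveq : A.mulVec xhat i - b i = -δhat := by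
            rw [abs_of_neg hneg] at heq; linarith
          constructor
          · nlinarith [hεpos, hs, hveq]
          · nlinarith [hεw, hveq, mul_le_mul_of_nonneg_left
              (le_abs_self (A.mulVec d i)) hεpos.le]
        · have hsv : Real.sign (A.mulVec xhat i - b i) = 1 := Real.sign_of_pos hpos
          rw [hsv, one_mul] at hs
          have hveq : A.mulVec xhat i - b i = δhat := by
            rw [abs_of_pos hpos] at heq; linarith
          constructor
          · nlinarith [hεw, hveq, mul_le_mul_of_nonneg_left
              (neg_le_abs (A.mulVec d i)) hεpos.le]
          · nlinarith [hεpos, hs, hveq]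
      · have hf1 := hεle1 i
        rw [if_pos hlt] at hf1
        have hεw : ε * (1 + |A.mulVec d i|) ≤ δhat - |A.mulVec xhat i - b i| :=
          (le_div_iff₀ hw1).mp hf1
        constructor
        · nlinarith [hεw, neg_abs_le (A.mulVec xhat i - b i),
            mul_le_mul_of_nonneg_left (neg_le_abs (A.mulVec d i)) hεpos.le]
        · nlinarith [hεw, le_abs_self (A.mulVec xhat i - b i),
            mul_le_mul_of_nonneg_left (le_abs_self (A.mulVec d i)) hεpos.le]
    · intro j
      by_cases hx : xhat j = 0
      · by_cases hcj : |∑ i, A i j * yhat i| = 1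
        · have hd := hd3 j hcj hx
          have hxj : (xhat + ε • d) j = ε * d j := by
            simp [hx]
          rw [hxj]
          nlinarith [hd, hεpos]
        · have hdj := hd4 j hcj
          have hxj : (xhat + ε • d) j = 0 := by simp [hx, hdj]
          rw [hxj, mul_zero]
      · have hc2j := hc2 j hx
        have hg := hεle3 j
        rw [if_neg hx] at hg
        have hεd : ε * (1 + |d j|) ≤ |xhat j| :=
          (le_div_iff₀ (by positivity)).mp hg
        have hsx : Real.sign (xhat j) * xhat j = |xhat j| := sign_mul_self_eq_abs hx
        have habs : |Real.sign (xhat j)| = 1 := abs_sign_eq_one hx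
        have hb : |Real.sign (xhat j) * d j| = |d j| := by
          rw [abs_mul, habs, one_mul]
        have hnegd : -|d j| ≤ Real.sign (xhat j) * d j := by
          rw [← hb]; exact neg_abs_le _
        rw [hc2j]
        simp only [Pi.add_apply, Pi.smul_apply, smul_eq_mul]
        nlinarith [hsx, hεd, hεpos, mul_le_mul_of_nonneg_left hnegd hεpos.le]
    · intro j hcj
      have hxj := hJ j hcj
      have hdj := hd4 j hcj
      simp [hxj, hdj]
    · exact le_trans (min_le_left _ _) hε1c
  · rintro ⟨x, t, ht, hb1, hb2, hb3, hb4, hb5⟩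
    have htne : t ≠ 0 := ne_of_gt ht
    have hmv : ∀ i, A.mulVec (t⁻¹ • (x - xhat)) i
        = t⁻¹ * (A.mulVec x i - A.mulVec xhat i) := by
      intro i
      rw [Matrix.mulVec_smul, Matrix.mulVec_sub]
      simp
    refine ⟨t⁻¹ • (x - xhat), ?_, ?_, ?_, ?_⟩
    · intro i hi
      have key : A.mulVec x i - A.mulVec xhat i = -t * Real.sign (yhat i) := by
        linear_combination (hb1 i hi) - (hv2 i hi)
      rw [hmv i, key]
      field_simp
    · intro i hiv hiy
      rw [hmv i]
      obtain ⟨hl, hu⟩ := hb2 i hiy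
      have hvne : A.mulVec xhat i - b i ≠ 0 := by
        intro h; rw [h] at hiv; simp at hiv; linarith
      rcases hvne.lt_or_gt with hneg | hpos
      · have hsv : Real.sign (A.mulVec xhat i - b i) = -1 := Real.sign_of_neg hneg
        have hveq : A.mulVec xhat i - b i = -δhat := by
          rw [abs_of_neg hneg] at hiv; linarith
        rw [hsv]
        have hre : (-1 : ℝ) * (t⁻¹ * (A.mulVec x i - A.mulVec xhat i))
            = t⁻¹ * (-(A.mulVec x i - A.mulVec xhat i)) := by ring
        rw [hre, inv_mul_le_iff₀ ht]
        linarith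
      · have hsv : Real.sign (A.mulVec xhat i - b i) = 1 := Real.sign_of_pos hpos
        have hveq : A.mulVec xhat i - b i = δhat := by
          rw [abs_of_pos hpos] at hiv; linarith
        rw [hsv, one_mul, inv_mul_le_iff₀ ht]
        linarith
    · intro j hcj hxj
      have hb := hb3 j
      have hre : (t⁻¹ • (x - xhat)) j = t⁻¹ * x j := by
        simp [hxj]
      rw [hre]
      have : (∑ i, A i j * yhat i) * (t⁻¹ * x j)
          = t⁻¹ * ((∑ i, A i j * yhat i) * x j) := by ring
      rw [this]
      exact mul_nonpos_of_nonneg_of_nonpos (inv_nonneg.2 ht.le) hb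
    · intro j hcj
      simp [hb4 j hcj, hJ j hcj]
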